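/- Let K ≥ 2 and δ ∈ (0, 1/(4K)). Consider the instance I_2 with N = K items having rewards r_1 = … = r_{K−1} = 1, r_K = (1−δ)/(2−δ), and preferences v_1 = 1/(K−1) − 2δ, v_2 = … = v_{K−1} = 1/(K−1), v_K = 1. Then R([K], v) ≥ (1−2δ)/(2−2δ), hence θ_v ≥ (1−2δ)/(2−2δ); moreover (1−δ)/(2−δ) − (1−2δ)/(2−2δ) ≥ δ/4. -/

import Mathlib

/-- The expected reward `R(S, v)` of an assortment `S`. -/
noncomputable def Rew {N : ℕ} (r v : Fin N → ℝ) (S : Finset (Fin N)) : ℝ :=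
  (∑ i ∈ S, r i * v i) / (1 + ∑ i ∈ S, v i)

/-- `θ_v`: the optimal expected reward over assortments of size at most `K`. -/
noncomputable def thetaOpt (N K : ℕ) (r v : Fin N → ℝ) : ℝ :=
  ((Finset.univ : Finset (Fin N)).powerset.filter (fun S => S.card ≤ K)).sup'
    ⟨∅, by simp⟩ (Rew r v)

/- `Top([N], w, θ)`: take the `min {K, N}` items `i` with the largest values
`(r i − θ) * w i` (ties broken in favor of smaller index), then remove all items
with `r i − θ ≤ 0`. -/
open Classical in
noncomputable def TopSet (N K : ℕ) (r w : Fin N → ℝ) (θ : ℝ) : Finset (Fin N) :=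
  ((List.insertionSort (fun i j =>
      (r j - θ) * w j < (r i - θ) * w i ∨
      ((r i - θ) * w i = (r j - θ) * w j ∧ i ≤ j)) (List.finRange N)).take
    (min K N)).toFinset.filter (fun i => θ < r i)
/-- For instance `I₂` (rewards `r_1 = … = r_{K−1} = 1`, `r_K = (1−δ)/(2−δ)`;
preferences `v_1 = 1/(K−1) − 2δ`, `v_2 = … = v_{K−1} = 1/(K−1)`, `v_K = 1`):
`R([K], v) ≥ (1−2δ)/(2−2δ)`, hence `θ_v ≥ (1−2δ)/(2−2δ)`; moreover
`(1−δ)/(2−δ) − (1−2δ)/(2−2δ) ≥ δ/4`. -/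
theorem stmt15 (K : ℕ) (hK : 2 ≤ K) (δ : ℝ) (hδ : 0 < δ ∧ δ < 1 / (4 * K))
    (r v : Fin K → ℝ)
    (hr : ∀ i, r i = if (i : ℕ) < K - 1 then 1 else (1 - δ) / (2 - δ))
    (hv : ∀ i, v i = if (i : ℕ) = 0 then 1 / ((K : ℝ) - 1) - 2 * δ
      else if (i : ℕ) < K - 1 then 1 / ((K : ℝ) - 1) else 1) :
    (1 - 2 * δ) / (2 - 2 * δ) ≤ Rew r v Finset.univ ∧
      (1 - 2 * δ) / (2 - 2 * δ) ≤ thetaOpt K K r v ∧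
      δ / 4 ≤ (1 - δ) / (2 - δ) - (1 - 2 * δ) / (2 - 2 * δ) := by
  obtain ⟨hδ0, hδ1⟩ := hδ
  have hKR : (2:ℝ) ≤ (K:ℝ) := by exact_mod_cast hK
  have hδ8 : δ < 1/8 := by
    have h4 : (8:ℝ) ≤ 4 * K := by linarith
    have : (1:ℝ) / (4*K) ≤ 1/8 := by
      apply one_div_le_one_div_of_le <;> linarith
    linarith
  set c : ℝ := 1/((K:ℝ)-1) with hc
  have hK1 : ((K:ℝ) - 1) ≠ 0 := by linarith
  have hcK : ((K:ℝ)-1) * c = 1 := by rw [hc, mul_one_div_cancel hK1]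
  have hcast : ((K - 1 : ℕ) : ℝ) = (K:ℝ) - 1 := by
    have : (1:ℕ) ≤ K := by omega
    push_cast [Nat.cast_sub this]; ring
  -- generic sum lemma
  have sum_aux : ∀ a b : ℝ, (∑ n ∈ Finset.range K,
      ((if n < K - 1 then a else b) + (if n = 0 then -(2*δ) else 0)))
      = ((K:ℝ)-1) * a + b - 2*δ := by
    intro a b
    obtain ⟨m, hm⟩ : ∃ m, K = m + 1 := ⟨K - 1, by omega⟩
    rw [Finset.sum_add_distrib]
    have h1 : (∑ n ∈ Finset.range K, (if n = 0 then -(2*δ) else 0)) = -(2*δ) := by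
      rw [Finset.sum_ite_eq' (Finset.range K) 0 (fun _ => -(2*δ))]
      simp [Finset.mem_range]; omega
    have h2 : (∑ n ∈ Finset.range K, (if n < K - 1 then a else b))
        = ((K:ℝ)-1) * a + b := by
      subst hm
      simp only [Nat.add_sub_cancel]
      rw [Finset.sum_range_succ]
      have h3 : (∑ n ∈ Finset.range m, (if n < m then a else b)) = (m : ℕ) • a := by
        rw [show ∑ n ∈ Finset.range m, (if n < m then a else b)
            = ∑ _n ∈ Finset.range m, a from
          Finset.sum_congr rfl (fun n hn => by simp [Finset.mem_range.mp hn]),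
          Finset.sum_const, Finset.card_range]
      rw [h3, nsmul_eq_mul]
      push_cast
      simp
    rw [h1, h2]; ring
  have hsumv : (∑ i, v i) = 2 - 2*δ := by
    have heq : ∀ i : Fin K, v i =
        (if (i:ℕ) < K - 1 then c else 1) + (if (i:ℕ) = 0 then -(2*δ) else 0) := by
      intro i
      rw [hv i]
      rcases Nat.eq_zero_or_pos (i:ℕ) with h0 | h0
      · have h1 : 0 < K - 1 := by omega
        simp [h0, h1]; ring
      · have : (i:ℕ) ≠ 0 := by omega
        simp [this]
    rw [Finset.sum_congr rfl (fun i _ => heq i),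
      Fin.sum_univ_eq_sum_range (fun n =>
        (if n < K - 1 then c else 1) + (if n = 0 then -(2*δ) else 0)) K,
      sum_aux c 1]
    rw [hcK]; ring
  have hsumrv : (∑ i, r i * v i) = 1 - 2*δ + (1-δ)/(2-δ) := by
    have heq : ∀ i : Fin K, r i * v i =
        (if (i:ℕ) < K - 1 then c else (1-δ)/(2-δ)) + (if (i:ℕ) = 0 then -(2*δ) else 0) := by
      intro i
      rw [hr i, hv i]
      rcases Nat.eq_zero_or_pos (i:ℕ) with h0 | h0
      · have h1 : 0 < K - 1 := by omega
        simp [h0, h1]; ring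
      · have hne : (i:ℕ) ≠ 0 := by omega
        by_cases hlt : (i:ℕ) < K - 1 <;> simp [hne, hlt]
    rw [Finset.sum_congr rfl (fun i _ => heq i),
      Fin.sum_univ_eq_sum_range (fun n =>
        (if n < K - 1 then c else (1-δ)/(2-δ)) + (if n = 0 then -(2*δ) else 0)) K,
      sum_aux c ((1-δ)/(2-δ))]
    rw [hcK]; ring
  have h2δ : (0:ℝ) < 2 - δ := by linarith
  have h22δ : (0:ℝ) < 2 - 2*δ := by linarith
  have h32δ : (0:ℝ) < 3 - 2*δ := by linarith
  have hRew : Rew r v Finset.univ = (3 - 6*δ + 2*δ^2) / ((2-δ) * (3 - 2*δ)) := by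
    rw [Rew, hsumv, hsumrv]
    rw [div_eq_div_iff (by linarith) (by positivity)]
    field_simp
    ring
  have h1 : (1 - 2*δ)/(2 - 2*δ) ≤ Rew r v Finset.univ := by
    rw [hRew, div_le_div_iff₀ h22δ (by positivity)]
    nlinarith [hδ0, hδ8]
  refine ⟨h1, ?_, ?_⟩
  · refine le_trans h1 ?_
    apply Finset.le_sup'
    simp [Finset.card_univ]
  · rw [div_sub_div _ _ (ne_of_gt h2δ) (ne_of_gt h22δ), le_div_iff₀ (by positivity)]
    nlinarith [hδ0, hδ8]
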